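/- Gentle measurement lemma: let ρ be a density operator and X an operator with 0 ≤ X ≤ I on a finite-dimensional Hilbert space, and suppose Tr[ρX] ≥ 1 − ε for some ε ≥ 0. Then ‖ρ − (√X ρ √X)/Tr[ρX]‖₁ ≤ 2√ε. -/

import Mathlib

open Matrix BigOperators
open scoped ComplexOrder

/-- The positive semidefinite square root of a positive semidefinite matrix
(removed from Mathlib; reinstated with its December 2024 definition). -/
noncomputable def Matrix.PosSemidef.sqrt {n : Type*} [Fintype n] [DecidableEq n]
    {𝕜 : Type*} [RCLike 𝕜] {A : Matrix n n 𝕜} (hA : A.PosSemidef) : Matrix n n 𝕜 :=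
  hA.1.eigenvectorUnitary.1 * diagonal ((↑) ∘ (√·) ∘ hA.1.eigenvalues) *
  (star hA.1.eigenvectorUnitary : Matrix n n 𝕜)

/-- The trace norm `‖A‖₁ = Tr √(A† A)` of a square complex matrix. -/
noncomputable def traceNorm {ι : Type*} [Fintype ι] [DecidableEq ι]
    (A : Matrix ι ι ℂ) : ℝ :=
  ((Matrix.posSemidef_conjTranspose_mul_self A).sqrt.trace).re

section SqrtAux

open scoped MatrixOrder

variable {ι : Type*} [Fintype ι] [DecidableEq ι] {𝕜 : Type*} [RCLike 𝕜]

lemma Matrix.PosSemidef.sqrt_eq_cfcSqrt {A : Matrix ι ι 𝕜} (hA : A.PosSemidef) :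
    hA.sqrt = CFC.sqrt A := by
  rw [CFC.sqrt_eq_real_sqrt A (nonneg_iff_posSemidef.mpr hA),
    cfcₙ_eq_cfc (hf := Real.continuous_sqrt.continuousOn) (hf0 := Real.sqrt_zero), hA.1.cfc_eq]
  simp only [IsHermitian.cfc, Unitary.conjStarAlgAut_apply]
  rfl

lemma Matrix.PosSemidef.posSemidef_sqrt {A : Matrix ι ι 𝕜} (hA : A.PosSemidef) :
    hA.sqrt.PosSemidef := by
  rw [hA.sqrt_eq_cfcSqrt]
  exact nonneg_iff_posSemidef.mp (CFC.sqrt_nonneg A)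

lemma Matrix.PosSemidef.sqrt_mul_self {A : Matrix ι ι 𝕜} (hA : A.PosSemidef) :
    hA.sqrt * hA.sqrt = A := by
  rw [hA.sqrt_eq_cfcSqrt]
  exact CFC.sqrt_mul_sqrt_self A (nonneg_iff_posSemidef.mpr hA)

lemma Matrix.PosSemidef.eq_sqrt_of_sq_eq {A : Matrix ι ι 𝕜} (hA : A.PosSemidef)
    {B : Matrix ι ι 𝕜} (hB : B.PosSemidef) (hAB : A ^ 2 = B) : A = hB.sqrt := by
  rw [hB.sqrt_eq_cfcSqrt]
  exact (CFC.sqrt_unique (a := B) (b := A) (by rw [← sq]; exact hAB)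
    (nonneg_iff_posSemidef.mpr hA)).symm

end SqrtAux

namespace GentleAux

lemma key_real' (g1 G2 G3 c ε : ℝ) (hc_pos : 0 < c) (hc1 : c ≤ 1) (hcε : 1 - ε ≤ c^2)
    (hA : ∀ x y : ℝ, 0 ≤ (x^2 + 2*x*y*c + y^2) + (x^2*g1 + 2*x*y*G2 + y^2*G3))
    (hB : ∀ x y : ℝ, 0 ≤ (x^2 + 2*x*y*c + y^2) - (x^2*g1 + 2*x*y*G2 + y^2*G3)) :
    g1 - G3 ≤ 2*Real.sqrt ε := by
  have hε : 0 ≤ ε := by nlinarith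
  have hs2 : Real.sqrt (1 - c^2) ^ 2 = 1 - c^2 := Real.sq_sqrt (by nlinarith)
  have hs_nonneg : 0 ≤ Real.sqrt (1 - c^2) := Real.sqrt_nonneg _
  set s := Real.sqrt (1 - c^2)
  have hs1 : s ≤ 1 := by nlinarith
  have main : g1 - G3 ≤ 2 * s := by
    rcases eq_or_lt_of_le hs_nonneg with hs0 | hs_pos
    · have hc_one : c = 1 := by nlinarith
      have hqw : g1 - 2*G2 + G3 = 0 := by
        have h1 := hB (-1) 1
        have h2 := hA (-1) 1
        rw [hc_one] at h1 h2
        nlinarith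
      have hkey : ∀ l : ℝ, g1 + 2*l*(G2 - g1) ≤ 1 := by
        intro l
        have := hB (1-l) l
        rw [hc_one] at this
        nlinarith
      have hr : G2 - g1 = 0 := by
        by_contra hne
        have h2 := hkey ((2 - g1)/(2*(G2 - g1)))
        have : 2*((2 - g1)/(2*(G2 - g1)))*(G2 - g1) = 2 - g1 := by
          field_simp
        rw [this] at h2
        linarith
      have : g1 - G3 = 0 := by linarith
      linarith
    · have x1 : Real.sqrt (1+s) ^ 2 = 1 + s := Real.sq_sqrt (by linarith)
      have y1 : Real.sqrt (1-s) ^ 2 = 1 - s := Real.sq_sqrt (by linarith)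
      have xy : Real.sqrt (1+s) * Real.sqrt (1-s) = c := by
        rw [← Real.sqrt_mul (by linarith)]
        have : (1+s)*(1-s) = c^2 := by nlinarith
        rw [this, Real.sqrt_sq hc_pos.le]
      have e1 := hB (Real.sqrt (1+s)) (-Real.sqrt (1-s))
      have e2 := hA (Real.sqrt (1-s)) (-Real.sqrt (1+s))
      have q1 : 2*Real.sqrt (1+s)*(-Real.sqrt (1-s))*c = -2*(c*c) := by
        linear_combination (-2*c) * xy
      have q2 : 2*Real.sqrt (1+s)*(-Real.sqrt (1-s))*G2 = -2*(c*G2) := by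
        linear_combination (-2*G2) * xy
      have q3 : 2*Real.sqrt (1-s)*(-Real.sqrt (1+s))*c = -2*(c*c) := by
        linear_combination (-2*c) * xy
      have q4 : 2*Real.sqrt (1-s)*(-Real.sqrt (1+s))*G2 = -2*(c*G2) := by
        linear_combination (-2*G2) * xy
      have q5 : Real.sqrt (1+s)^2*g1 = (1+s)*g1 := by linear_combination g1*x1
      have q6 : (-Real.sqrt (1-s))^2*G3 = (1-s)*G3 := by linear_combination G3*y1
      have q7 : (-Real.sqrt (1-s))^2 = (1-s) := by linear_combination y1
      have q8 : Real.sqrt (1-s)^2*g1 = (1-s)*g1 := by linear_combination g1*y1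
      have q9 : (-Real.sqrt (1+s))^2*G3 = (1+s)*G3 := by linear_combination G3*x1
      have q10 : (-Real.sqrt (1+s))^2 = (1+s) := by linear_combination x1
      have e1' : 0 ≤ (1+s) - 2*(c*c) + (1-s) - ((1+s)*g1 - 2*(c*G2) + (1-s)*G3) := by
        linarith [e1, x1, q1, q2, q5, q6, q7]
      have e2' : 0 ≤ (1-s) - 2*(c*c) + (1+s) + ((1-s)*g1 - 2*(c*G2) + (1+s)*G3) := by
        linarith [e2, y1, q3, q4, q8, q9, q10]
      have h4 : 0 ≤ 4*s^2 - 2*s*(g1 - G3) := by nlinarith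
      nlinarith [h4, hs_pos]
  have hfin : s ≤ Real.sqrt ε := by
    apply Real.sqrt_le_sqrt
    nlinarith
  linarith

lemma key_real (g1 g2 g3 cp tr ε : ℝ) (htr : 0 < tr) (htr1 : tr ≤ 1)
    (hcp : tr ≤ cp) (hεtr : 1 - ε ≤ tr)
    (hA : ∀ x y : ℝ, 0 ≤ (x^2 + 2*x*y*cp + y^2*tr) + (x^2*g1 + 2*x*y*g2 + y^2*g3))
    (hB : ∀ x y : ℝ, 0 ≤ (x^2 + 2*x*y*cp + y^2*tr) - (x^2*g1 + 2*x*y*g2 + y^2*g3)) :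
    g1 - g3/tr ≤ 2*Real.sqrt ε := by
  have hst : 0 < Real.sqrt tr := Real.sqrt_pos.mpr htr
  have hst2 : Real.sqrt tr ^ 2 = tr := Real.sq_sqrt htr.le
  have hstne : Real.sqrt tr ≠ 0 := ne_of_gt hst
  have hq : ∀ x y : ℝ, 0 ≤ x^2 + 2*x*y*cp + y^2*tr := by
    intro x y; have h1 := hA x y; have h2 := hB x y; linarith
  have hcp2 : cp^2 ≤ tr := by have := hq tr (-cp); nlinarith
  have hc_pos : 0 < cp / Real.sqrt tr := div_pos (lt_of_lt_of_le htr hcp) hst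
  have hc2 : (cp / Real.sqrt tr)^2 ≤ 1 := by
    rw [div_pow, hst2, div_le_one htr]; exact hcp2
  have hc1 : cp / Real.sqrt tr ≤ 1 := by nlinarith
  have hcε : 1 - ε ≤ (cp / Real.sqrt tr)^2 := by
    rw [div_pow, hst2, le_div_iff₀ htr]
    nlinarith
  have habs : ∀ x y : ℝ, (x^2 + 2*x*(y/Real.sqrt tr)*cp + (y/Real.sqrt tr)^2*tr)
      = x^2 + 2*x*y*(cp/Real.sqrt tr) + y^2 := by
    intro x y
    rw [div_pow, hst2]
    field_simp
    try ring
  have hquad : ∀ x y : ℝ, (x^2*g1 + 2*x*(y/Real.sqrt tr)*g2 + (y/Real.sqrt tr)^2*g3)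
      = x^2*g1 + 2*x*y*(g2/Real.sqrt tr) + y^2*(g3/tr) := by
    intro x y
    rw [div_pow, hst2]
    ring
  have := key_real' g1 (g2/Real.sqrt tr) (g3/tr) (cp/Real.sqrt tr) ε hc_pos hc1 hcε
    (fun x y => by have := hA x (y/Real.sqrt tr); rw [habs, hquad] at this; exact this)
    (fun x y => by have := hB x (y/Real.sqrt tr); rw [habs, hquad] at this; exact this)
  linarith

variable {n : ℕ}

lemma trace_re_nonneg (M : Matrix (Fin n) (Fin n) ℂ) (hM : M.PosSemidef) :
    0 ≤ (trace M).re := by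
  have h : ∀ i, (0:ℂ) ≤ M i i := by
    intro i
    exact hM.diag_nonneg
  have h' : ∀ i, 0 ≤ (M i i).re := fun i => (Complex.le_def.mp (h i)).1
  unfold trace
  rw [Complex.re_sum]
  exact Finset.sum_nonneg fun i _ => h' i

lemma trace_real {M : Matrix (Fin n) (Fin n) ℂ} (hM : M.IsHermitian) :
    (((trace M).re : ℝ) : ℂ) = trace M := by
  have h := congrArg Matrix.trace hM.eq
  rw [trace_conjTranspose, Complex.star_def] at h
  exact Complex.conj_eq_iff_re.mp h

lemma sandwich_nonneg {M : Matrix (Fin n) (Fin n) ℂ} (hM : M.PosSemidef)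
    (B : Matrix (Fin n) (Fin n) ℂ) : 0 ≤ (trace (Bᴴ * M * B)).re :=
  trace_re_nonneg _ (hM.conjTranspose_mul_mul_same B)

lemma conj_mul_conj {V D E : Matrix (Fin n) (Fin n) ℂ} (hV : star V * V = 1) :
    (V * D * star V) * (V * E * star V) = V * (D * E) * star V := by
  calc (V * D * star V) * (V * E * star V)
      = V * D * (star V * V) * E * star V := by noncomm_ring
    _ = V * (D * E) * star V := by rw [hV]; noncomm_ring

lemma real_diag_herm (d : Fin n → ℝ) :
    (diagonal (fun i => (d i : ℂ)))ᴴ = diagonal (fun i => (d i : ℂ)) := by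
  simp [diagonal_conjTranspose, Pi.star_def, Complex.conj_ofReal]

lemma conj_psd {V : Matrix (Fin n) (Fin n) ℂ} (d : Fin n → ℝ) (hd : ∀ i, 0 ≤ d i) :
    (V * diagonal (fun i => (d i : ℂ)) * star V).PosSemidef := by
  rw [star_eq_conjTranspose]
  exact (posSemidef_diagonal_iff.mpr fun i =>
    (by exact_mod_cast hd i : (0:ℂ) ≤ (d i : ℂ))).mul_mul_conjTranspose_same V

lemma conj_herm {V : Matrix (Fin n) (Fin n) ℂ} (d : Fin n → ℝ) :
    (V * diagonal (fun i => (d i : ℂ)) * star V).IsHermitian := by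
  show _ᴴ = _
  rw [star_eq_conjTranspose]
  simp only [conjTranspose_mul, conjTranspose_conjTranspose, real_diag_herm, ← mul_assoc]

lemma eig_le_one {X : Matrix (Fin n) (Fin n) ℂ} (hX : X.IsHermitian)
    (hXle : (1 - X).PosSemidef) (i : Fin n) : hX.eigenvalues i ≤ 1 := by
  have hv := hX.mulVec_eigenvectorBasis i
  have hpsd := hXle.dotProduct_mulVec_nonneg ⇑(hX.eigenvectorBasis i)
  have hnorm : star (hX.eigenvectorBasis i).ofLp ⬝ᵥ
      (hX.eigenvectorBasis i).ofLp = 1 := by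
    rw [dotProduct_comm, ← EuclideanSpace.inner_eq_star_dotProduct]
    simp [inner_self_eq_norm_sq_to_K, hX.eigenvectorBasis.orthonormal.1 i]
  rw [sub_mulVec, one_mulVec, hv, dotProduct_sub, dotProduct_smul, hnorm] at hpsd
  have := (Complex.le_def.mp hpsd).1
  simp only [Complex.sub_re, Complex.one_re, Complex.real_smul, Complex.ofReal_mul,
    Complex.mul_re, Complex.ofReal_re, Complex.ofReal_im] at this ⊢
  simp at this
  linarith

lemma one_sub_conj {V : Matrix (Fin n) (Fin n) ℂ} (hV : V * star V = 1) (e : Fin n → ℝ) :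
    1 - V * diagonal (fun i => (e i : ℂ)) * star V =
      V * diagonal (fun i => ((1 - e i : ℝ) : ℂ)) * star V := by
  have h2 : (diagonal (fun i => ((1 - e i : ℝ) : ℂ))) =
      1 - diagonal (fun i => (e i : ℂ)) := by
    ext i j
    rcases eq_or_ne i j with rfl | hij
    · simp only [diagonal_apply_eq, Matrix.sub_apply, Matrix.one_apply_eq]
      push_cast; ring
    · simp [diagonal_apply_ne _ hij, Matrix.one_apply_ne hij]
  rw [h2, mul_sub, sub_mul, mul_one, hV]

lemma one_add_conj {V : Matrix (Fin n) (Fin n) ℂ} (hV : V * star V = 1) (e : Fin n → ℝ) :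
    1 + V * diagonal (fun i => (e i : ℂ)) * star V =
      V * diagonal (fun i => ((1 + e i : ℝ) : ℂ)) * star V := by
  have h2 : (diagonal (fun i => ((1 + e i : ℝ) : ℂ))) =
      1 + diagonal (fun i => (e i : ℂ)) := by
    ext i j
    rcases eq_or_ne i j with rfl | hij
    · simp only [diagonal_apply_eq, Matrix.add_apply, Matrix.one_apply_eq]
      push_cast; ring
    · simp [diagonal_apply_ne _ hij, Matrix.one_apply_ne hij]
  rw [h2, mul_add, add_mul, mul_one, hV]

lemma sqrt_le_one {X : Matrix (Fin n) (Fin n) ℂ} (hX : X.PosSemidef)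
    (hXle : (1 - X).PosSemidef) : (1 - hX.sqrt).PosSemidef := by
  have hV : (hX.1.eigenvectorUnitary : Matrix (Fin n) (Fin n) ℂ) *
      star (hX.1.eigenvectorUnitary : Matrix (Fin n) (Fin n) ℂ) = 1 :=
    (Matrix.mem_unitaryGroup_iff).mp (hX.1.eigenvectorUnitary).2
  have hsq : hX.sqrt = (hX.1.eigenvectorUnitary : Matrix (Fin n) (Fin n) ℂ) *
      diagonal (fun i => ((Real.sqrt (hX.1.eigenvalues i) : ℝ) : ℂ)) *
      star (hX.1.eigenvectorUnitary : Matrix (Fin n) (Fin n) ℂ) := rfl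
  rw [hsq, one_sub_conj hV]
  apply conj_psd
  intro i
  have h1 : hX.1.eigenvalues i ≤ 1 := eig_le_one hX.1 hXle i
  have h2 : Real.sqrt (hX.1.eigenvalues i) ≤ 1 := Real.sqrt_le_one.mpr h1
  linarith

lemma sub_psd_aux {P Q X1 : Matrix (Fin n) (Fin n) ℂ} (hQh : Qᴴ = Q)
    (hQQ : Q * Q = P) (hPP : P * P = X1) (h1P : (1 - P).PosSemidef) :
    (P - X1).PosSemidef := by
  have h := h1P.conjTranspose_mul_mul_same Q
  have h1 : Qᴴ * (1 - P) * Q = P - X1 := by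
    subst hPP; subst hQQ; rw [hQh]; noncomm_ring
  rwa [h1] at h

lemma sub_sqrt_psd {X : Matrix (Fin n) (Fin n) ℂ} (hX : X.PosSemidef)
    (hXle : (1 - X).PosSemidef) : (hX.sqrt - X).PosSemidef :=
  sub_psd_aux hX.posSemidef_sqrt.posSemidef_sqrt.1 hX.posSemidef_sqrt.sqrt_mul_self
    hX.sqrt_mul_self (sqrt_le_one hX hXle)

lemma expand_re (M ψ P : Matrix (Fin n) (Fin n) ℂ)
    (hM : Mᴴ = M) (hψ : ψᴴ = ψ) (hP : Pᴴ = P) (x y : ℝ) :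
    (trace ((((x:ℂ)•ψ + (y:ℂ)•(P*ψ))ᴴ) * M * ((x:ℂ)•ψ + (y:ℂ)•(P*ψ)))).re
      = x^2 * (trace (M*(ψ*ψ))).re + 2*x*y*(trace (M*(ψ*ψ)*P)).re
        + y^2 * (trace (M*(P*(ψ*ψ)*P))).re := by
  have t_expand : trace ((((x:ℂ)•ψ + (y:ℂ)•(P*ψ))ᴴ) * M * ((x:ℂ)•ψ + (y:ℂ)•(P*ψ)))
      = (x:ℂ)*(x:ℂ)*trace (ψᴴ*M*ψ) + (x:ℂ)*(y:ℂ)*trace (ψᴴ*M*(P*ψ))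
        + (x:ℂ)*(y:ℂ)*trace ((P*ψ)ᴴ*M*ψ) + (y:ℂ)*(y:ℂ)*trace ((P*ψ)ᴴ*M*(P*ψ)) := by
    simp only [conjTranspose_add, conjTranspose_smul, add_mul, mul_add, smul_mul_assoc,
      mul_smul_comm, trace_add, trace_smul, smul_eq_mul, Complex.star_def, Complex.conj_ofReal]
    ring
  have r1 : trace (ψᴴ*M*ψ) = trace (M*(ψ*ψ)) := by
    rw [hψ, trace_mul_comm (ψ*M) ψ, trace_mul_comm M (ψ*ψ)]
    congr 1
    noncomm_ring
  have r2 : trace (ψᴴ*M*(P*ψ)) = trace (M*(P*(ψ*ψ))) := by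
    rw [hψ, trace_mul_comm (ψ*M) (P*ψ), trace_mul_comm M (P*(ψ*ψ))]
    congr 1
    noncomm_ring
  have r3 : trace ((P*ψ)ᴴ*M*ψ) = trace (M*(ψ*ψ)*P) := by
    rw [conjTranspose_mul, hψ, hP,
      show ψ*P*M*ψ = (ψ*P)*(M*ψ) from by noncomm_ring,
      trace_mul_comm (ψ*P) (M*ψ)]
    congr 1
    noncomm_ring
  have r4 : trace ((P*ψ)ᴴ*M*(P*ψ)) = trace (M*(P*(ψ*ψ)*P)) := by
    rw [conjTranspose_mul, hψ, hP,
      show ψ*P*M*(P*ψ) = (ψ*P)*(M*(P*ψ)) from by noncomm_ring,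
      trace_mul_comm (ψ*P) (M*(P*ψ))]
    congr 1
    noncomm_ring
  have r5 : trace (M*(P*(ψ*ψ))) = star (trace (M*(ψ*ψ)*P)) := by
    rw [trace_mul_comm M (P*(ψ*ψ)), ← trace_conjTranspose]
    congr 1
    simp only [conjTranspose_mul, hM, hψ, hP]
    noncomm_ring
  rw [t_expand, r1, r2, r3, r4, r5]
  have hre : ∀ (a b : ℝ) (z : ℂ), ((a:ℂ)*(b:ℂ)*z).re = a*b*z.re := by
    intro a b z
    rw [← Complex.ofReal_mul, Complex.re_ofReal_mul]
  simp only [Complex.add_re, hre]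
  simp only [Complex.star_def, Complex.conj_re]
  ring

end GentleAux

open GentleAux

set_option maxHeartbeats 1000000 in
/-- Gentle measurement lemma: if `ρ` is a density operator, `0 ≤ X ≤ I` and
`Tr[ρX] ≥ 1 − ε`, then `‖ρ − √X ρ √X / Tr[ρX]‖₁ ≤ 2√ε`. -/
theorem gentle_measurement {n : ℕ} (ρ X : Matrix (Fin n) (Fin n) ℂ) (ε : ℝ)
    (hε : 0 ≤ ε) (hρ : ρ.PosSemidef) (hρtr : ρ.trace = 1)
    (hX : X.PosSemidef) (hXle : (1 - X).PosSemidef)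
    (h : 1 - ε ≤ ((ρ * X).trace).re) :
    traceNorm (ρ - ((ρ * X).trace)⁻¹ • (hX.sqrt * ρ * hX.sqrt)) ≤
      2 * Real.sqrt ε := by
  set P := hX.sqrt with hP_def
  set ψ := hρ.sqrt with hψ_def
  have hψh : ψᴴ = ψ := hρ.posSemidef_sqrt.1
  have hψψ : ψ * ψ = ρ := hρ.sqrt_mul_self
  have hPh : Pᴴ = P := hX.posSemidef_sqrt.1
  have hPP : P * P = X := hX.sqrt_mul_self
  have sand : ∀ A : Matrix (Fin n) (Fin n) ℂ, trace (ψᴴ * A * ψ) = trace (ρ * A) := by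
    intro A
    rw [hψh, trace_mul_comm (ψ*A) ψ, ← hψψ]
    congr 1
    noncomm_ring
  have hXherm : (ψᴴ * X * ψ).IsHermitian := by
    show _ᴴ = _
    simp [conjTranspose_mul, hX.1.eq, hψh, mul_assoc]
  have t_real : ((((ρ*X).trace).re : ℝ) : ℂ) = (ρ*X).trace := by
    rw [← sand X]
    exact trace_real hXherm
  have tr_nonneg : 0 ≤ ((ρ*X).trace).re := by
    rw [← sand X]
    exact sandwich_nonneg hX ψ
  rcases eq_or_lt_of_le tr_nonneg with h0 | htr_pos
  · -- trace is zero
    have hc : (ρ*X).trace = 0 := by rw [← t_real, ← h0]; simp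
    rw [hc]
    simp only [_root_.inv_zero, zero_smul, sub_zero]
    have hρsq : ρ ^ 2 = ρᴴ * ρ := by rw [pow_two, hρ.1.eq]
    have hρsqrt : ρ = (posSemidef_conjTranspose_mul_self ρ).sqrt :=
      hρ.eq_sqrt_of_sq_eq (posSemidef_conjTranspose_mul_self ρ) hρsq
    unfold traceNorm
    rw [← hρsqrt, hρtr]
    have hε1 : (1:ℝ) ≤ ε := by
      have := h; rw [← h0] at this; linarith
    have hsq1 : (1:ℝ) ≤ Real.sqrt ε := by
      rw [show (1:ℝ) = Real.sqrt 1 by simp]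
      exact Real.sqrt_le_sqrt hε1
    simp
    linarith
  · -- main case
    have hKh : (P*ρ*P)ᴴ = P*ρ*P := by
      simp [conjTranspose_mul, hPh, hρ.1.eq, mul_assoc]
    have hstarc : star (((ρ*X).trace)⁻¹) = ((ρ*X).trace)⁻¹ := by
      rw [← t_real, ← Complex.ofReal_inv, Complex.star_def, Complex.conj_ofReal]
    have hHh : (ρ - ((ρ*X).trace)⁻¹ • (P*ρ*P)).IsHermitian := by
      show _ᴴ = _
      rw [conjTranspose_sub, conjTranspose_smul, hKh, hρ.1.eq, hstarc]
    set H := ρ - ((ρ*X).trace)⁻¹ • (P*ρ*P) with hH_def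
    set V := (hHh.eigenvectorUnitary : Matrix (Fin n) (Fin n) ℂ) with hV_def
    have hV1 : V * star V = 1 := mem_unitaryGroup_iff.mp hHh.eigenvectorUnitary.2
    have hV2 : star V * V = 1 := mem_unitaryGroup_iff'.mp hHh.eigenvectorUnitary.2
    set lam := hHh.eigenvalues with hlam_def
    have hspec : H = V * diagonal (fun i => ((lam i : ℝ) : ℂ)) * star V := by
      have := hHh.spectral_theorem; rw [Unitary.conjStarAlgAut_apply] at this; exact this
    set sg : Fin n → ℝ := fun i => if 0 ≤ lam i then 1 else -1 with hsg_def
    set S := V * diagonal (fun i => ((sg i : ℝ) : ℂ)) * star V with hS_def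
    have hSh : Sᴴ = S := conj_herm sg
    have habs : ∀ i, sg i * lam i = |lam i| := by
      intro i
      by_cases h' : 0 ≤ lam i
      · simp [hsg_def, h', abs_of_nonneg h']
      · simp [hsg_def, h', abs_of_neg (lt_of_not_ge h')]
    have hSH : S * H = V * diagonal (fun i => ((|lam i| : ℝ) : ℂ)) * star V := by
      rw [hspec, hS_def, conj_mul_conj hV2, diagonal_mul_diagonal]
      have hfun : (fun i => ((sg i : ℂ)) * ((lam i : ℂ))) = fun i => ((|lam i| : ℝ) : ℂ) := by
        funext i
        rw [← Complex.ofReal_mul, habs i]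
      rw [hfun]
    have hSHpsd : (S*H).PosSemidef := by
      rw [hSH]; exact conj_psd _ (fun i => abs_nonneg _)
    have hsq : (S*H)^2 = Hᴴ*H := by
      rw [pow_two, hSH, conj_mul_conj hV2, diagonal_mul_diagonal,
        hHh.eq, hspec, conj_mul_conj hV2, diagonal_mul_diagonal]
      have hfun : (fun i => (((|lam i| : ℝ)) : ℂ) * (((|lam i| : ℝ)) : ℂ))
          = fun i => ((lam i : ℂ)) * ((lam i : ℂ)) := by
        funext i
        rw [← Complex.ofReal_mul, ← Complex.ofReal_mul, abs_mul_abs_self]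
      rw [hfun]
    have tn_eq : traceNorm H = (trace (S*H)).re := by
      unfold traceNorm
      rw [← hSHpsd.eq_sqrt_of_sq_eq (posSemidef_conjTranspose_mul_self H) hsq]
    have h1S : (1 - S).PosSemidef := by
      rw [hS_def, one_sub_conj hV1 sg]
      apply conj_psd
      intro i
      by_cases h' : 0 ≤ lam i <;> simp [hsg_def, h'] <;> norm_num
    have h1S' : (1 + S).PosSemidef := by
      rw [hS_def, one_add_conj hV1 sg]
      apply conj_psd
      intro i
      by_cases h' : 0 ≤ lam i <;> simp [hsg_def, h'] <;> norm_num
    -- scalar quantities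
    have hPρP : trace (P*ρ*P) = trace (ρ*X) := by
      rw [trace_mul_comm (P*ρ) P, ← hPP, trace_mul_comm ρ (P*P)]
      rw [Matrix.mul_assoc]
    have hone : ((1:Matrix (Fin n) (Fin n) ℂ))ᴴ = 1 := conjTranspose_one
    have hAq : ∀ x y : ℝ, 0 ≤ (x^2 + 2*x*y*(trace (ρ*P)).re + y^2*((ρ*X).trace).re)
        + (x^2*(trace (S*ρ)).re + 2*x*y*(trace (S*ρ*P)).re + y^2*(trace (S*(P*ρ*P))).re) := by
      intro x y
      have h0 := sandwich_nonneg h1S' ((x:ℂ)•ψ + (y:ℂ)•(P*ψ))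
      have hsplit : (((x:ℂ)•ψ + (y:ℂ)•(P*ψ))ᴴ) * (1 + S) * ((x:ℂ)•ψ + (y:ℂ)•(P*ψ))
          = ((((x:ℂ)•ψ + (y:ℂ)•(P*ψ))ᴴ) * 1 * ((x:ℂ)•ψ + (y:ℂ)•(P*ψ)))
            + ((((x:ℂ)•ψ + (y:ℂ)•(P*ψ))ᴴ) * S * ((x:ℂ)•ψ + (y:ℂ)•(P*ψ))) := by
        rw [mul_add _ (1 : Matrix (Fin n) (Fin n) ℂ) S, add_mul]
      rw [hsplit, trace_add, Complex.add_re,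
        expand_re 1 ψ P hone hψh hPh x y, expand_re S ψ P hSh hψh hPh x y, hψψ] at h0
      rw [Matrix.one_mul ρ, Matrix.one_mul (P*ρ*P), hρtr, hPρP] at h0
      rw [Complex.one_re] at h0
      calc (0:ℝ) ≤ _ := h0
        _ = _ := by rw [show trace (S*ρ*P) = trace (S*(ρ*P)) from by rw [mul_assoc]]; ring
    have hBq : ∀ x y : ℝ, 0 ≤ (x^2 + 2*x*y*(trace (ρ*P)).re + y^2*((ρ*X).trace).re)
        - (x^2*(trace (S*ρ)).re + 2*x*y*(trace (S*ρ*P)).re + y^2*(trace (S*(P*ρ*P))).re) := by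
      intro x y
      have h0 := sandwich_nonneg h1S ((x:ℂ)•ψ + (y:ℂ)•(P*ψ))
      have hsplit : (((x:ℂ)•ψ + (y:ℂ)•(P*ψ))ᴴ) * (1 - S) * ((x:ℂ)•ψ + (y:ℂ)•(P*ψ))
          = ((((x:ℂ)•ψ + (y:ℂ)•(P*ψ))ᴴ) * 1 * ((x:ℂ)•ψ + (y:ℂ)•(P*ψ)))
            - ((((x:ℂ)•ψ + (y:ℂ)•(P*ψ))ᴴ) * S * ((x:ℂ)•ψ + (y:ℂ)•(P*ψ))) := by
        rw [mul_sub _ (1 : Matrix (Fin n) (Fin n) ℂ) S, sub_mul]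
      rw [hsplit, trace_sub, Complex.sub_re,
        expand_re 1 ψ P hone hψh hPh x y, expand_re S ψ P hSh hψh hPh x y, hψψ] at h0
      rw [Matrix.one_mul ρ, Matrix.one_mul (P*ρ*P), hρtr, hPρP] at h0
      rw [Complex.one_re] at h0
      calc (0:ℝ) ≤ _ := h0
        _ = _ := by rw [show trace (S*ρ*P) = trace (S*(ρ*P)) from by rw [mul_assoc]]; ring
    -- tr ≤ cp
    have hcp_ge : ((ρ*X).trace).re ≤ (trace (ρ*P)).re := by
      have hs := sandwich_nonneg (sub_sqrt_psd hX hXle) ψ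
      have hsplit : ψᴴ * (P - X) * ψ = ψᴴ*P*ψ - ψᴴ*X*ψ := by noncomm_ring
      rw [hsplit, trace_sub, Complex.sub_re, sand P, sand X] at hs
      linarith
    -- tr ≤ 1
    have htr1 : ((ρ*X).trace).re ≤ 1 := by
      have hs := sandwich_nonneg hXle ψ
      have hsplit : ψᴴ * (1 - X) * ψ = ψᴴ*1*ψ - ψᴴ*X*ψ := by noncomm_ring
      rw [hsplit, trace_sub, Complex.sub_re, sand 1, sand X, mul_one, hρtr] at hs
      simp only [Complex.one_re] at hs
      linarith
    have hkey := key_real ((trace (S*ρ)).re) ((trace (S*ρ*P)).re) ((trace (S*(P*ρ*P))).re)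
      ((trace (ρ*P)).re) (((ρ*X).trace).re) ε htr_pos htr1 hcp_ge h hAq hBq
    -- trace (S*H) computation
    have hSHsplit : S * H = S*ρ - ((ρ*X).trace)⁻¹ • (S*(P*ρ*P)) := by
      rw [hH_def, mul_sub, Matrix.mul_smul]
    have htrace : (trace (S*H)).re
        = (trace (S*ρ)).re - (((ρ*X).trace).re)⁻¹ * (trace (S*(P*ρ*P))).re := by
      rw [hSHsplit, trace_sub, trace_smul, Complex.sub_re, ← t_real,
        ← Complex.ofReal_inv, smul_eq_mul, Complex.re_ofReal_mul, Complex.ofReal_re]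
    rw [tn_eq, htrace]
    have hdiv : (((ρ*X).trace).re)⁻¹ * (trace (S*(P*ρ*P))).re
        = (trace (S*(P*ρ*P))).re / (((ρ*X).trace).re) := by
      rw [div_eq_mul_inv]; ring
    rw [hdiv]
    linarith
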